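/- Every left R-module M embeds as a pure submodule into its double character module M⁺⁺ via the canonical evaluation map. -/

import Mathlib

/- STATEMENT 3: Every left `R`-module `M` embeds as a pure submodule into its double character
module `M⁺⁺` via the canonical evaluation map `m ↦ (f ↦ f m)`.
A monomorphism `ι` is pure if `N' ⊗ ι` is injective for every (right) `R`-module `N'`. -/

/-- The canonical evaluation map `M → M⁺⁺`. -/
def characterModuleEval (R : Type) [CommRing R] (M : Type) [AddCommGroup M] [Module R M] :
    M →ₗ[R] CharacterModule (CharacterModule M) where
  toFun m :=
    { toFun := fun f => f m
      map_zero' := rfl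
      map_add' := fun _ _ => rfl }
  map_add' m m' := by ext f; exact f.map_add m m'
  map_smul' r m := by ext f; rfl

section aux

variable {R : Type} [CommRing R] {M : Type} [AddCommGroup M] [Module R M]
  {N' : Type} [AddCommGroup N'] [Module R N'] (g : M →ₗ[R] CharacterModule N')

/-- For `g : M → N'⁺` and `n : N'`, the character `m ↦ g m n` of `M`. -/
def gstar (n : N') : CharacterModule M where
  toFun m := g m n
  map_zero' := by show g 0 n = 0; rw [g.map_zero]; rfl
  map_add' m m' := by show g (m + m') n = g m n + g m' n; rw [g.map_add]; rfl

lemma gstar_zero : gstar g 0 = 0 := by ext m; exact (g m).map_zero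

lemma gstar_add (n n' : N') : gstar g (n + n') = gstar g n + gstar g n' := by
  ext m; exact (g m).map_add n n'

lemma gstar_smul (r : R) (n : N') : gstar g (r • n) = r • gstar g n := by
  ext m
  show g m (r • n) = g (r • m) n
  rw [g.map_smul r m]
  rfl

/-- The extension of `g : M → N'⁺` to `M⁺⁺ → N'⁺`. -/
def gExt : CharacterModule (CharacterModule M) →ₗ[R] CharacterModule N' where
  toFun φ :=
    { toFun := fun n => φ (gstar g n)
      map_zero' := by show φ (gstar g 0) = 0; rw [gstar_zero]; exact φ.map_zero
      map_add' := fun n n' => by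
        show φ (gstar g (n + n')) = φ (gstar g n) + φ (gstar g n')
        rw [gstar_add]; exact φ.map_add _ _ }
  map_add' φ φ' := by ext n; rfl
  map_smul' r φ := by
    ext n
    show φ (r • gstar g n) = φ (gstar g (r • n))
    rw [gstar_smul]

end aux

theorem eval_into_double_character_is_pure_mono
    (R : Type) [CommRing R] (M : Type) [AddCommGroup M] [Module R M] :
    Function.Injective (characterModuleEval R M) ∧
      ∀ (N' : Type) (_ : AddCommGroup N') (_ : Module R N'),
        Function.Injective (LinearMap.lTensor N' (characterModuleEval R M)) := by
  constructor
  · intro m m' h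
    rw [← sub_eq_zero]
    apply CharacterModule.eq_zero_of_character_apply
    intro c
    have : (characterModuleEval R M) m c = (characterModuleEval R M) m' c := by rw [h]
    rw [map_sub, sub_eq_zero]; exact this
  · intro N' _ _
    rw [LinearMap.lTensor_inj_iff_rTensor_inj]
    rw [rTensor_injective_iff_lcomp_surjective]
    intro g
    exact ⟨gExt g, by ext m n; rfl⟩
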